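/- Fix natural numbers n, m and a real α ≥ 0. If every identical-ordering (IDO) chores instance with n agents and m items admits an integral allocation with total subsidy at most α, then every chores instance with n agents and m items admits an integral allocation with total subsidy at most α. -/

import Mathlib

/-- Reduction from general chores instances to identical-ordering (IDO) instances:
if every IDO chores instance with `n` agents and `m` items admits an integral allocation
with total subsidy at most `α`, then so does every chores instance with `n` agents
and `m` items. -/
theorem chores_IDO_reduction (n m : ℕ) (α : ℝ) (hα : 0 ≤ α)
    (hIDO : ∀ (w : Fin n → ℝ) (c : Fin n → Fin m → ℝ),
      (∀ i, 0 < w i) → (∑ i, w i = 1) →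
      (∀ i e, 0 ≤ c i e) → (∀ i e, c i e ≤ 1) →
      (∃ σ : Equiv.Perm (Fin m), ∀ i : Fin n, ∀ j k : Fin m, j ≤ k → c i (σ k) ≤ c i (σ j)) →
      ∃ X : Fin m → Fin n,
        ∑ i, max ((∑ e, if X e = i then c i e else 0) - w i * ∑ e, c i e) 0 ≤ α)
    (w : Fin n → ℝ) (c : Fin n → Fin m → ℝ)
    (hwpos : ∀ i, 0 < w i) (hwsum : ∑ i, w i = 1)
    (hc0 : ∀ i e, 0 ≤ c i e) (hc1 : ∀ i e, c i e ≤ 1) :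
    ∃ X : Fin m → Fin n,
      ∑ i, max ((∑ e, if X e = i then c i e else 0) - w i * ∑ e, c i e) 0 ≤ α := by
  classical
  -- sorting permutation for each agent
  set σ : Fin n → Equiv.Perm (Fin m) := fun i => Tuple.sort (c i) with hσdef
  -- sorted (decreasing) cost functions
  set c' : Fin n → Fin m → ℝ := fun i j => c i (σ i (Fin.rev j)) with hc'def
  have hmono : ∀ i : Fin n, Monotone (fun k => c i (σ i k)) := fun i => Tuple.monotone_sort (c i)
  have hanti : ∀ i : Fin n, ∀ j k : Fin m, j ≤ k → c' i k ≤ c' i j := by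
    intro i j k hjk
    exact hmono i (Fin.rev_le_rev.mpr hjk)
  have hsum : ∀ i, ∑ j, c' i j = ∑ e, c i e := by
    intro i
    exact Equiv.sum_comp ((Fin.revPerm).trans (σ i)) (c i)
  obtain ⟨X', hX'⟩ := hIDO w c' hwpos hwsum (fun i e => hc0 i _) (fun i e => hc1 i _)
    ⟨Equiv.refl _, by intro i j k hjk; simpa using hanti i j k hjk⟩
  -- Hall's theorem setup
  set S : Fin m → Finset (Fin m) :=
    fun j => Finset.univ.filter (fun e => c (X' j) e ≤ c' (X' j) j) with hSdef
  have hScard : ∀ j : Fin m, m - (j : ℕ) ≤ (S j).card := by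
    intro j
    simp only [hSdef]
    have hcompl : (Finset.univ.filter (fun e => ¬ c (X' j) e ≤ c' (X' j) j)).card ≤ (j : ℕ) := by
      have hle : (Finset.univ.filter (fun e => ¬ c (X' j) e ≤ c' (X' j) j)).card
          ≤ (Finset.Ioi (Fin.rev j)).card := by
        apply Finset.card_le_card_of_injOn (fun e => (σ (X' j)).symm e)
        · intro e he
          simp only [Finset.mem_coe, Finset.mem_filter, Finset.mem_univ, true_and, not_le] at he
          rw [Finset.mem_coe, Finset.mem_Ioi]
          by_contra hle
          push_neg at hle
          have := hmono (X' j) hle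
          simp only [Equiv.apply_symm_apply] at this
          exact absurd he (not_lt.mpr this)
        · intro a _ b _ h
          exact (σ (X' j)).symm.injective h
      have hcard : (Finset.Ioi (Fin.rev j)).card = m - 1 - (Fin.rev j : ℕ) := Fin.card_Ioi _
      have hrev : ((Fin.rev j : Fin m) : ℕ) = m - ((j : ℕ) + 1) := Fin.val_rev j
      have hj := j.isLt
      omega
    have htot := Finset.card_filter_add_card_filter_not
      (s := (Finset.univ : Finset (Fin m))) (p := fun e => c (X' j) e ≤ c' (X' j) j)
    have hcu : (Finset.univ : Finset (Fin m)).card = m := by simp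
    omega
  have hall : ∀ s : Finset (Fin m), s.card ≤ (s.biUnion S).card := by
    intro s
    rcases s.eq_empty_or_nonempty with rfl | hs
    · simp
    · set j₀ := s.min' hs with hj₀
      have hmem : j₀ ∈ s := s.min'_mem hs
      have h1 : s.card ≤ m - (j₀ : ℕ) := by
        have hsub : s ⊆ Finset.Ici j₀ := by
          intro x hx
          exact Finset.mem_Ici.mpr (s.min'_le x hx)
        calc s.card ≤ (Finset.Ici j₀).card := Finset.card_le_card hsub
          _ = m - (j₀ : ℕ) := Fin.card_Ici _
      have h2 : (S j₀).card ≤ (s.biUnion S).card :=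
        Finset.card_le_card (fun x hx => Finset.mem_biUnion.mpr ⟨j₀, hmem, hx⟩)
      exact h1.trans ((hScard j₀).trans h2)
  obtain ⟨f, hfinj, hfmem⟩ := (Finset.all_card_le_biUnion_card_iff_exists_injective S).mp hall
  have hfbij : Function.Bijective f := Finite.injective_iff_bijective.mp hfinj
  set τ : Equiv.Perm (Fin m) := Equiv.ofBijective f hfbij with hτdef
  refine ⟨fun e => X' (τ.symm e), ?_⟩
  have key : ∀ i : Fin n,
      max ((∑ e, if X' (τ.symm e) = i then c i e else 0) - w i * ∑ e, c i e) 0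
      ≤ max ((∑ j, if X' j = i then c' i j else 0) - w i * ∑ j, c' i j) 0 := by
    intro i
    apply max_le_max _ le_rfl
    apply sub_le_sub
    · have hre : (∑ e, if X' (τ.symm e) = i then c i e else 0)
          = ∑ j, if X' j = i then c i (τ j) else 0 := by
        rw [← Equiv.sum_comp τ (fun e => if X' (τ.symm e) = i then c i e else 0)]
        refine Finset.sum_congr rfl fun j _ => ?_
        rw [Equiv.symm_apply_apply]
      rw [hre]
      apply Finset.sum_le_sum
      intro j _
      by_cases hji : X' j = i
      · simp only [hji, if_pos]
        have := hfmem j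
        simp only [hSdef, Finset.mem_filter, Finset.mem_univ, true_and] at this
        have hτj : τ j = f j := rfl
        rw [hτj, ← hji]
        exact this
      · simp [hji]
    · rw [hsum i]
  calc ∑ i, max ((∑ e, if X' (τ.symm e) = i then c i e else 0) - w i * ∑ e, c i e) 0
      ≤ ∑ i, max ((∑ j, if X' j = i then c' i j else 0) - w i * ∑ j, c' i j) 0 :=
        Finset.sum_le_sum fun i _ => key i
    _ ≤ α := hX'
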